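/- Suppose each f_j is σ-strongly convex (σ > 0), d(x) is the unique global minimizer of d ↦ Q(x,d), t(x) = Q(x,d(x)), and x is not a critical point of min (F_1,…,F_m). Then for any β ∈ (0,1) there exists ᾱ > 0 such that for every α ∈ (0, ᾱ] and every j = 1,…,m, F_j(x + α d(x)) ≤ F_j(x) + β α t(x). -/

import Mathlib

open Filter Topology Finset
open scoped RealInnerProductSpace

noncomputable section

/-- One-sided directional derivative: `c = F'(x; d) = lim_{α→0⁺} (F(x+αd) − F(x))/α`. -/
def HasDirDeriv {n : ℕ} (F : EuclideanSpace ℝ (Fin n) → ℝ)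
    (x d : EuclideanSpace ℝ (Fin n)) (c : ℝ) : Prop :=
  Filter.Tendsto (fun α : ℝ => (F (x + α • d) - F x) / α) (nhdsWithin 0 (Set.Ioi 0)) (nhds c)

/-- Subdifferential of a convex function: `∂h(x) = {ξ : h(y) ≥ h(x) + ⟪ξ, y − x⟫ ∀ y}`. -/
def subdiff {n : ℕ} (h : EuclideanSpace ℝ (Fin n) → ℝ) (x : EuclideanSpace ℝ (Fin n)) :
    Set (EuclideanSpace ℝ (Fin n)) :=
  {ξ | ∀ y, h x + ⟪ξ, y - x⟫ ≤ h y}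

/-- `σ`-strong convexity: `f(αx+(1−α)y) ≤ αf(x)+(1−α)f(y) − (σ/2)α(1−α)‖x−y‖²`. -/
def StronglyConvexFun {n : ℕ} (σ : ℝ) (f : EuclideanSpace ℝ (Fin n) → ℝ) : Prop :=
  ∀ x y : EuclideanSpace ℝ (Fin n), ∀ α : ℝ, 0 ≤ α → α ≤ 1 →
    f (α • x + (1 - α) • y) ≤ α * f x + (1 - α) * f y - σ / 2 * α * (1 - α) * ‖x - y‖ ^ 2

/-- `Q_j(x,d) = ∇f_j(x)ᵀd + ½ dᵀ∇²f_j(x)d + g_j(x+d) − g_j(x)`, where the Hessian is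
the Fréchet derivative of the gradient. -/
def Qj {n m : ℕ} (f g : Fin (m + 1) → EuclideanSpace ℝ (Fin n) → ℝ)
    (j : Fin (m + 1)) (x d : EuclideanSpace ℝ (Fin n)) : ℝ :=
  ⟪gradient (f j) x, d⟫ + (1 / 2) * ⟪(fderiv ℝ (gradient (f j)) x) d, d⟫
    + g j (x + d) - g j x

/-- `Q(x,d) = max_{1 ≤ j ≤ m} Q_j(x,d)`. -/
def Qmax {n m : ℕ} (f g : Fin (m + 1) → EuclideanSpace ℝ (Fin n) → ℝ)
    (x d : EuclideanSpace ℝ (Fin n)) : ℝ :=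
  Finset.univ.sup' Finset.univ_nonempty (fun j => Qj f g j x d)

/- ### Auxiliary lemmas -/


lemma inner_gradient_eq {n : ℕ} (f : EuclideanSpace ℝ (Fin n) → ℝ)
    (x d : EuclideanSpace ℝ (Fin n)) : ⟪gradient f x, d⟫ = fderiv ℝ f x d := by
  rw [gradient, ← InnerProductSpace.toDual_apply_apply, LinearIsometryEquiv.apply_symm_apply]

lemma hasDerivAt_comp_line {n : ℕ} {f : EuclideanSpace ℝ (Fin n) → ℝ}
    {y : EuclideanSpace ℝ (Fin n)} (hf : DifferentiableAt ℝ f y)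
    (x d : EuclideanSpace ℝ (Fin n)) (s : ℝ) (hy : y = x + s • d) :
    HasDerivAt (fun α : ℝ => f (x + α • d)) (fderiv ℝ f y d) s := by
  have hc : HasDerivAt (fun α : ℝ => x + α • d) d s := by
    simpa using ((hasDerivAt_id s).smul_const d).const_add x
  subst hy
  exact (hf.hasFDerivAt.comp_hasDerivAt s hc)

lemma tendsto_quot_f {n : ℕ} {f : EuclideanSpace ℝ (Fin n) → ℝ}
    {x : EuclideanSpace ℝ (Fin n)} (hf : DifferentiableAt ℝ f x)
    (d : EuclideanSpace ℝ (Fin n)) :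
    Tendsto (fun α : ℝ => (f (x + α • d) - f x) / α) (𝓝[>] 0)
      (𝓝 ⟪gradient f x, d⟫) := by
  rw [inner_gradient_eq]
  have h := hasDerivAt_comp_line hf x d 0 (by simp)
  have h2 := (hasDerivAt_iff_tendsto_slope.1 h).mono_left
    (nhdsWithin_mono _ (fun a (ha : a ∈ Set.Ioi (0:ℝ)) => ne_of_gt ha))
  refine h2.congr fun α => ?_
  simp [slope, div_eq_inv_mul]

lemma StronglyConvexFun.convexOn {n : ℕ} {σ : ℝ} (hσ : 0 < σ)
    {f : EuclideanSpace ℝ (Fin n) → ℝ} (hf : StronglyConvexFun σ f) :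
    ConvexOn ℝ Set.univ f := by
  refine ⟨convex_univ, fun x _ y _ a b ha hb hab => ?_⟩
  have hb' : b = 1 - a := by linarith
  have := hf x y a ha (by linarith)
  subst hb'
  have hn : 0 ≤ σ / 2 * a * (1 - a) * ‖x - y‖ ^ 2 := by positivity
  simp only [smul_eq_mul]
  linarith

lemma quot_g_le {n : ℕ} {g : EuclideanSpace ℝ (Fin n) → ℝ}
    (hg : ConvexOn ℝ Set.univ g) (x d : EuclideanSpace ℝ (Fin n))
    {α : ℝ} (h0 : 0 < α) (h1 : α ≤ 1) :
    (g (x + α • d) - g x) / α ≤ g (x + d) - g x := by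
  have key : g (x + α • d) ≤ α * g (x + d) + (1 - α) * g x := by
    have := hg.2 (Set.mem_univ (x + d)) (Set.mem_univ x) (le_of_lt h0)
      (by linarith : (0:ℝ) ≤ 1 - α) (by ring)
    calc g (x + α • d) = g (α • (x + d) + (1 - α) • x) := by
          congr 1
          module
      _ ≤ α * g (x + d) + (1 - α) * g x := by simpa [smul_eq_mul] using this
  rw [div_le_iff₀ h0]
  nlinarith [key]

lemma hessian_nonneg {n : ℕ} {f : EuclideanSpace ℝ (Fin n) → ℝ}
    (hf : ContDiff ℝ 2 f) (hconv : ConvexOn ℝ Set.univ f)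
    (x d : EuclideanSpace ℝ (Fin n)) :
    0 ≤ ⟪(fderiv ℝ (gradient f) x) d, d⟫ := by
  have hfd : Differentiable ℝ f := hf.differentiable (by norm_num)
  have hgradC : ContDiff ℝ 1 (gradient f) := by
    have h1 : ContDiff ℝ 1 (fderiv ℝ f) := hf.fderiv_right (by norm_num)
    have : gradient f = fun y => (InnerProductSpace.toDual ℝ _).symm (fderiv ℝ f y) := rfl
    rw [this]
    exact (InnerProductSpace.toDual ℝ _).symm.toContinuousLinearEquiv.contDiff.comp h1
  have hgradD : Differentiable ℝ (gradient f) := hgradC.differentiable (by norm_num)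
  have hc : ∀ s : ℝ, HasDerivAt (fun α : ℝ => x + α • d) d s := fun s => by
    simpa using ((hasDerivAt_id s).smul_const d).const_add x
  set φ : ℝ → ℝ := fun s => f (x + s • d) with hφ
  set ψ : ℝ → ℝ := fun s => ⟪gradient f (x + s • d), d⟫ with hψ
  have hφψ : ∀ s, HasDerivAt φ (ψ s) s := by
    intro s
    have h2 : HasDerivAt φ (fderiv ℝ f (x + s • d) d) s := by
      exact (hfd (x + s • d)).hasFDerivAt.comp_hasDerivAt s (hc s)
    show HasDerivAt φ (⟪gradient f (x + s • d), d⟫) s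
    rw [inner_gradient_eq]
    exact h2
  have hφconv : ConvexOn ℝ Set.univ φ := by
    refine ⟨convex_univ, fun s _ u _ a b ha hb hab => ?_⟩
    have := hconv.2 (Set.mem_univ (x + s • d)) (Set.mem_univ (x + u • d)) ha hb hab
    calc φ (a * s + b * u) = f (a • (x + s • d) + b • (x + u • d)) := by
          simp only [hφ, smul_eq_mul]
          congr 1
          match_scalars <;> linarith
      _ ≤ a * f (x + s • d) + b * f (x + u • d) := by simpa [smul_eq_mul] using this
      _ = a • φ s + b • φ u := by simp [hφ, smul_eq_mul]
  have hderiv : deriv φ = ψ := funext fun s => (hφψ s).deriv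
  have hψmono : Monotone ψ := by
    have := hφconv.monotoneOn_deriv (fun y _ => (hφψ y).differentiableAt)
    rw [hderiv] at this
    exact monotoneOn_univ.1 this
  have hψd : HasDerivAt ψ ⟪(fderiv ℝ (gradient f) x) d, d⟫ 0 := by
    have hg0 : HasDerivAt (fun s : ℝ => gradient f (x + s • d))
        ((fderiv ℝ (gradient f) x) d) 0 := by
      have := (hgradD (x + (0:ℝ) • d)).hasFDerivAt.comp_hasDerivAt 0 (hc 0)
      rw [zero_smul, add_zero] at this
      exact this
    have := hg0.inner (𝕜 := ℝ) (hasDerivAt_const 0 d)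
    simpa [hψ] using this
  have h2 := (hasDerivAt_iff_tendsto_slope.1 hψd).mono_left
    (nhdsWithin_mono _ (fun a (ha : a ∈ Set.Ioi (0:ℝ)) => ne_of_gt ha))
  refine ge_of_tendsto h2 ?_
  filter_upwards [self_mem_nhdsWithin] with s hs
  have hs : (0:ℝ) < s := hs
  have hmono : ψ 0 ≤ ψ s := hψmono hs.le
  have heq : slope ψ 0 s = (ψ s - ψ 0) / s := by
    rw [slope_def_field]; ring_nf
  rw [heq]
  exact div_nonneg (by linarith) hs.le


/-- if each `f_j` is `σ`-strongly convex, `d(x)` is the unique global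
minimizer of `d ↦ Q(x,d)`, `t(x) = Q(x,d(x))`, and `x` is not a critical point of
`min (F_1,…,F_m)` with `F_j = f_j + g_j`, then for any `β ∈ (0,1)` the Armijo condition
`F_j(x + α d(x)) ≤ F_j(x) + β α t(x)` holds for all sufficiently small `α > 0`. -/
theorem armijo_holds_for_small_steps {n m : ℕ} (σ : ℝ) (hσ : 0 < σ)
    (f g : Fin (m + 1) → EuclideanSpace ℝ (Fin n) → ℝ)
    (hfsc : ∀ j, StronglyConvexFun σ (f j))
    (hfC2 : ∀ j, ContDiff ℝ 2 (f j))
    (hgconv : ∀ j, ConvexOn ℝ Set.univ (g j))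
    (hgcont : ∀ j, Continuous (g j))
    (x dx : EuclideanSpace ℝ (Fin n)) (t : ℝ)
    (hmin : ∀ d, Qmax f g x dx ≤ Qmax f g x d)
    (huniq : ∀ d, (∀ d', Qmax f g x d ≤ Qmax f g x d') → d = dx)
    (ht : t = Qmax f g x dx)
    (F' : Fin (m + 1) → EuclideanSpace ℝ (Fin n) → ℝ)
    (hF' : ∀ j d, HasDirDeriv (fun y => f j y + g j y) x d (F' j d))
    (hnoncrit : ¬ (∀ d : EuclideanSpace ℝ (Fin n),
      0 ≤ Finset.univ.sup' Finset.univ_nonempty (fun j => F' j d)))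
    (β : ℝ) (hβ0 : 0 < β) (hβ1 : β < 1) :
    ∃ abar : ℝ, 0 < abar ∧ ∀ α : ℝ, 0 < α → α ≤ abar →
      ∀ j, f j (x + α • dx) + g j (x + α • dx) ≤ f j x + g j x + β * α * t := by
  have hfd : ∀ j, Differentiable ℝ (f j) := fun j => (hfC2 j).differentiable (by norm_num)
  -- f difference quotients converge to the inner product with the gradient
  have hfq : ∀ j (d : EuclideanSpace ℝ (Fin n)),
      Tendsto (fun α : ℝ => (f j (x + α • d) - f j x) / α) (𝓝[>] 0)
        (𝓝 ⟪gradient (f j) x, d⟫) := fun j d => tendsto_quot_f ((hfd j) x) d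
  -- hence g difference quotients converge as well
  have hgq : ∀ j (d : EuclideanSpace ℝ (Fin n)),
      Tendsto (fun α : ℝ => (g j (x + α • d) - g j x) / α) (𝓝[>] 0)
        (𝓝 (F' j d - ⟪gradient (f j) x, d⟫)) := by
    intro j d
    have h := (hF' j d).sub (hfq j d)
    refine h.congr fun α => ?_
    rw [div_sub_div_same]
    congr 1
    ring
  -- Step A : t < 0
  push_neg at hnoncrit
  obtain ⟨d0, hd0⟩ := hnoncrit
  set c : ℝ := Finset.univ.sup' Finset.univ_nonempty (fun j => F' j d0) with hcdef
  have hc0 : c < 0 := hd0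
  have hQq : ∀ j, Tendsto (fun α : ℝ => Qj f g j x (α • d0) / α) (𝓝[>] 0)
      (𝓝 (F' j d0)) := by
    intro j
    have hA : Tendsto (fun α : ℝ => ⟪gradient (f j) x, d0⟫
        + (α / 2) * ⟪(fderiv ℝ (gradient (f j)) x) d0, d0⟫
        + (g j (x + α • d0) - g j x) / α) (𝓝[>] 0)
        (𝓝 (⟪gradient (f j) x, d0⟫ + (0 / 2) * ⟪(fderiv ℝ (gradient (f j)) x) d0, d0⟫
          + (F' j d0 - ⟪gradient (f j) x, d0⟫))) := by
      refine Tendsto.add (Tendsto.add tendsto_const_nhds ?_) (hgq j d0)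
      exact ((tendsto_id.div_const 2).mul_const _).mono_left nhdsWithin_le_nhds
    have hval : ⟪gradient (f j) x, d0⟫
        + (0 / 2) * ⟪(fderiv ℝ (gradient (f j)) x) d0, d0⟫
        + (F' j d0 - ⟪gradient (f j) x, d0⟫) = F' j d0 := by ring
    rw [hval] at hA
    refine hA.congr' ?_
    filter_upwards [self_mem_nhdsWithin] with α (hα : (0:ℝ) < α)
    have hα' : α ≠ 0 := ne_of_gt hα
    simp only [Qj, map_smul, real_inner_smul_left, real_inner_smul_right, smul_eq_mul]
    field_simp
    ring
  have hev : ∀ᶠ α in 𝓝[>] (0:ℝ), ∀ j, Qj f g j x (α • d0) / α < c / 2 := by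
    refine eventually_all.2 fun j => ?_
    refine (hQq j).eventually_lt_const ?_
    have hle : F' j d0 ≤ c := Finset.le_sup' (fun j => F' j d0) (Finset.mem_univ j)
    linarith
  obtain ⟨α0, hα0q, hα0mem⟩ := (hev.and self_mem_nhdsWithin).exists
  have hα0pos : (0:ℝ) < α0 := hα0mem
  have hQmaxneg : Qmax f g x (α0 • d0) < 0 := by
    rw [Qmax, Finset.sup'_lt_iff]
    intro j _
    have h1 := hα0q j
    have h2 := (div_lt_iff₀ hα0pos).1 h1
    nlinarith
  have htneg : t < 0 := by
    rw [ht]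
    exact lt_of_le_of_lt (hmin (α0 • d0)) hQmaxneg
  -- Step B : F' j dx < β * t
  have hkey : ∀ j, F' j dx < β * t := by
    intro j
    have hbound : ∀ᶠ α in 𝓝[>] (0:ℝ),
        (g j (x + α • dx) - g j x) / α ≤ g j (x + dx) - g j x := by
      filter_upwards [Ioc_mem_nhdsGT_of_mem (Set.mem_Ico.2 ⟨le_refl (0:ℝ), zero_lt_one⟩)]
        with α hα
      exact quot_g_le (hgconv j) x dx hα.1 hα.2
    have hle1 : F' j dx - ⟪gradient (f j) x, dx⟫ ≤ g j (x + dx) - g j x :=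
      le_of_tendsto (hgq j dx) hbound
    have hH := hessian_nonneg (hfC2 j) (StronglyConvexFun.convexOn hσ (hfsc j)) x dx
    have hQj : Qj f g j x dx ≤ t := by
      rw [ht, Qmax]
      exact Finset.le_sup' (fun j => Qj f g j x dx) (Finset.mem_univ j)
    simp only [Qj] at hQj
    nlinarith
  -- Final step
  have hev2 : ∀ᶠ α in 𝓝[>] (0:ℝ), ∀ j,
      (f j (x + α • dx) + g j (x + α • dx) - (f j x + g j x)) / α < β * t :=
    eventually_all.2 fun j => (hF' j dx).eventually_lt_const (hkey j)
  rw [Filter.eventually_iff] at hev2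
  obtain ⟨u, hu, hsub⟩ := mem_nhdsGT_iff_exists_Ioc_subset.1 hev2
  refine ⟨u, hu, fun α hα1 hα2 j => ?_⟩
  have hmem : (f j (x + α • dx) + g j (x + α • dx) - (f j x + g j x)) / α < β * t :=
    hsub ⟨hα1, hα2⟩ j
  have h3 := (div_lt_iff₀ hα1).1 hmem
  nlinarith
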